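/- Let b₀ > 0 and consider the nonlinear integro-differential initial value problem ∂ₜb(t) = 64 b(t) ∫₀ᵗ b(τ)² dτ with b(0) = b₀. Then b(t) = b₀ √(tan²(8b₀t) + 1) solves this problem on [0, π/(16b₀)), and b(t) → ∞ as t ↑ π/(16b₀). Moreover, ω(t) := −16∫₀ᵗ b(τ)² dτ = −2b₀ tan(8b₀t) also diverges (to −∞) as t ↑ π/(16b₀). -/

import Mathlib

open Filter

/-- Blow-up solution `b(t) = b₀√(tan²(8b₀t)+1)`. -/
noncomputable def b6 (c : ℝ) (t : ℝ) : ℝ := c * Real.sqrt (Real.tan (8 * c * t) ^ 2 + 1)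

/-- `ω(t) = −2b₀ tan(8b₀t)`. -/
noncomputable def w6 (c : ℝ) (t : ℝ) : ℝ := -2 * c * Real.tan (8 * c * t)

lemma tan_sq_aux {x : ℝ} (h : Real.cos x ≠ 0) :
    Real.tan x ^ 2 + 1 = 1 / Real.cos x ^ 2 := by
  rw [Real.tan_eq_sin_div_cos]
  field_simp
  exact Real.sin_sq_add_cos_sq x

lemma cos_pos_aux (c : ℝ) (hc : 0 < c) {x : ℝ} (hx0 : 0 ≤ x)
    (hx : x < Real.pi / (16 * c)) : 0 < Real.cos (8 * c * x) := by
  apply Real.cos_pos_of_mem_Ioo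
  constructor
  · nlinarith [Real.pi_pos]
  · have h16 : (0:ℝ) < 16 * c := by linarith
    rw [lt_div_iff₀ h16] at hx
    nlinarith

lemma integ_aux (c : ℝ) (hc : 0 < c) {t : ℝ} (ht0 : 0 ≤ t)
    (ht : t < Real.pi / (16 * c)) :
    (∫ τ in (0 : ℝ)..t, (b6 c τ) ^ 2) = c / 8 * Real.tan (8 * c * t) := by
  have key : ∀ x ∈ Set.Icc (0:ℝ) t,
      HasDerivAt (fun s => c / 8 * Real.tan (8 * c * s)) ((b6 c x) ^ 2) x := by
    intro x hx
    have hcos : 0 < Real.cos (8 * c * x) :=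
      cos_pos_aux c hc hx.1 (lt_of_le_of_lt hx.2 ht)
    have h1 : HasDerivAt (fun s : ℝ => 8 * c * s) (8 * c) x := by
      simpa using (hasDerivAt_id x).const_mul (8 * c)
    have h2 := (Real.hasDerivAt_tan hcos.ne').comp x h1
    have h3 := h2.const_mul (c / 8)
    convert h3 using 1
    · rfl
    · rfl
    · rfl
    have hs : Real.sqrt (Real.tan (8*c*x) ^ 2 + 1) ^ 2 = Real.tan (8*c*x) ^ 2 + 1 :=
      Real.sq_sqrt (by positivity)
    simp only [b6]
    rw [mul_pow, hs, tan_sq_aux hcos.ne']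
    field_simp
  have hcont : ContinuousOn (fun τ => (b6 c τ) ^ 2) (Set.Icc 0 t) := by
    intro x hx
    have hcos : 0 < Real.cos (8 * c * x) :=
      cos_pos_aux c hc hx.1 (lt_of_le_of_lt hx.2 ht)
    have htan : ContinuousAt (fun τ => Real.tan (8 * c * τ)) x :=
      (Real.continuousAt_tan.2 hcos.ne').comp (by fun_prop)
    exact ContinuousAt.continuousWithinAt <| by
      unfold b6
      exact (((Real.continuous_sqrt.continuousAt.comp
        ((htan.pow 2).add continuousAt_const)).const_mul c).pow 2)
  rw [intervalIntegral.integral_eq_sub_of_hasDerivAt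
      (fun x hx => key x (by rwa [Set.uIcc_of_le ht0] at hx))
      (hcont.intervalIntegrable_of_Icc ht0)]
  simp

lemma tan_tendsto_aux (c : ℝ) (hc : 0 < c) :
    Tendsto (fun t => Real.tan (8 * c * t))
      (nhdsWithin (Real.pi / (16 * c)) (Set.Iio (Real.pi / (16 * c)))) atTop := by
  have h16 : (16 : ℝ) * c ≠ 0 := by positivity
  have hmap : Tendsto (fun t : ℝ => 8 * c * t)
      (nhdsWithin (Real.pi / (16 * c)) (Set.Iio (Real.pi / (16 * c))))
      (nhdsWithin (Real.pi / 2) (Set.Iio (Real.pi / 2))) := by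
    rw [tendsto_nhdsWithin_iff]
    constructor
    · have : (8 : ℝ) * c * (Real.pi / (16 * c)) = Real.pi / 2 := by
        field_simp; ring
      rw [← this]
      exact ((continuous_const.mul continuous_id).tendsto _).mono_left nhdsWithin_le_nhds
    · filter_upwards [self_mem_nhdsWithin] with x hx
      have hx' : x < Real.pi / (16 * c) := hx
      have : 8 * c * x < 8 * c * (Real.pi / (16 * c)) := by
        apply mul_lt_mul_of_pos_left hx' (by positivity)
      simpa [Set.mem_Iio] using this.trans_eq (by field_simp; ring)
  exact Real.tendsto_tan_pi_div_two.comp hmap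

/-- Blow-up of the Brocket–Wegner flow: for `b₀ > 0`, `b(t) = b₀√(tan²(8b₀t)+1)` solves
`∂ₜb(t) = 64 b(t) ∫₀ᵗ b(τ)² dτ`, `b(0) = b₀`, on `[0, π/(16b₀))`, with
`ω(t) := −16∫₀ᵗ b(τ)²dτ = −2b₀tan(8b₀t)`, and `b(t) → ∞`, `ω(t) → −∞` as `t ↑ π/(16b₀)`. -/
theorem stmt_6 (c : ℝ) (hc : 0 < c) :
    b6 c 0 = c ∧
    (∀ t ∈ Set.Ico (0 : ℝ) (Real.pi / (16 * c)),
      HasDerivAt (b6 c) (64 * b6 c t * ∫ τ in (0 : ℝ)..t, (b6 c τ) ^ 2) t ∧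
        w6 c t = -16 * ∫ τ in (0 : ℝ)..t, (b6 c τ) ^ 2) ∧
    Tendsto (b6 c)
      (nhdsWithin (Real.pi / (16 * c)) (Set.Iio (Real.pi / (16 * c)))) atTop ∧
    Tendsto (w6 c)
      (nhdsWithin (Real.pi / (16 * c)) (Set.Iio (Real.pi / (16 * c)))) atBot := by
  refine ⟨by simp [b6], ?_, ?_, ?_⟩
  · rintro t ⟨ht0, ht⟩
    rw [integ_aux c hc ht0 ht]
    have hcos : 0 < Real.cos (8 * c * t) := cos_pos_aux c hc ht0 ht
    constructor
    · -- derivative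
      have h1 : HasDerivAt (fun s : ℝ => 8 * c * s) (8 * c) t := by
        simpa using (hasDerivAt_id t).const_mul (8 * c)
      have h2 := (Real.hasDerivAt_tan hcos.ne').comp t h1
      have h3 : HasDerivAt (fun s => Real.tan (8 * c * s) ^ 2 + 1)
          (2 * Real.tan (8 * c * t) * (1 / Real.cos (8 * c * t) ^ 2 * (8 * c))) t := by
        simpa using ((h2.pow 2).add_const 1)
      have hpos : (0:ℝ) < Real.tan (8 * c * t) ^ 2 + 1 := by positivity
      have h4 := (Real.hasDerivAt_sqrt hpos.ne').comp t h3
      have h5 := h4.const_mul c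
      convert h5 using 1
      · rfl
      · rfl
      · rfl
      have hs : Real.sqrt (Real.tan (8*c*t) ^ 2 + 1) ^ 2 = Real.tan (8*c*t) ^ 2 + 1 :=
        Real.sq_sqrt hpos.le
      have hsne : Real.sqrt (Real.tan (8*c*t) ^ 2 + 1) ≠ 0 :=
        (Real.sqrt_pos.2 hpos).ne'
      simp only [b6]
      rw [tan_sq_aux hcos.ne']
      field_simp
      have hC : Real.cos (c * 8 * t) ≠ 0 := by rw [mul_comm c 8]; exact hcos.ne'
      have hs' : Real.sqrt (1 / Real.cos (c * 8 * t) ^ 2) ^ 2 = 1 / Real.cos (c * 8 * t) ^ 2 :=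
        Real.sq_sqrt (by positivity)
      have hsn : Real.sqrt (1 / Real.cos (c * 8 * t) ^ 2) ≠ 0 :=
        (Real.sqrt_pos.2 (by positivity)).ne'
      rw [eq_div_iff (by positivity)]
      have hone : Real.sqrt (1 / Real.cos (c * 8 * t) ^ 2) * Real.sqrt (1 / Real.cos (c * 8 * t) ^ 2)
          * Real.cos (c * 8 * t) ^ 2 = 1 := by
        rw [← sq, hs']; field_simp
      linear_combination (64 * Real.tan (c * 8 * t)) * hone
    · simp only [w6]; ring
  · apply tendsto_atTop_mono (fun t => ?_)
      ((tan_tendsto_aux c hc).const_mul_atTop hc)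
    simp only [b6]
    apply mul_le_mul_of_nonneg_left _ hc.le
    calc Real.tan (8 * c * t) ≤ |Real.tan (8 * c * t)| := le_abs_self _
      _ = Real.sqrt (Real.tan (8 * c * t) ^ 2) := (Real.sqrt_sq_eq_abs _).symm
      _ ≤ _ := Real.sqrt_le_sqrt (by linarith)
  · have := ((tan_tendsto_aux c hc).const_mul_atTop (by linarith : (0:ℝ) < 2 * c))
    have h2 := tendsto_neg_atTop_atBot.comp this
    exact h2.congr fun t => by simp only [w6, Function.comp_apply]; ring
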